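/- Let F_q be a finite field, k ≥ 1, let α_{i_1},…,α_{i_{k−1}} ∈ F_q be distinct and b,c,λ,η ∈ F_q. Let B be the k×k matrix whose first row is (1+η α_{i_1}^k, …, 1+η α_{i_{k−1}}^k, 1−λ+η(b^k−λc^k)) and whose r-th row, for 2 ≤ r ≤ k, is (α_{i_1}^{r−1}, …, α_{i_{k−1}}^{r−1}, b^{r−1}−λc^{r−1}). Then det B = ∏_{1≤j<ℓ≤k−1}(α_{i_ℓ}−α_{i_j}) · (Φ_J(b) − λ Φ_J(c)), where J = {i_1,…,i_{k−1}}. -/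

import Mathlib

open Polynomial Finset

noncomputable section

variable {F : Type*} [Field F]

/-- The twisted polynomial `∑_{i<k} f_i x^i + η f_h x^{k-1+t}` from `V_{k,t,h,η}`. -/
def twPoly (k t h : ℕ) (η : F) (f : Fin k → F) : Polynomial F :=
  (∑ i : Fin k, Polynomial.C (f i) * Polynomial.X ^ (i : ℕ)) +
    Polynomial.C (η * if hh : h < k then f ⟨h, hh⟩ else 0) * Polynomial.X ^ (k - 1 + t)

/-- The coefficient `f_{k-1}` of a coefficient vector `f : Fin k → F`. -/
def topCoeffFin {k : ℕ} (f : Fin k → F) : F :=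
  if hk : k - 1 < k then f ⟨k - 1, hk⟩ else 0

/-- Codewords of the row-column twisted Reed-Solomon code. -/
def rctrsWords (k t h : ℕ) (η : F) {m : ℕ} (α : Fin m → F) (b c lam : F) :
    Set (Fin (m + 1) → F) :=
  { w | ∃ f : Fin k → F,
      w = Fin.snoc (fun i => (twPoly k t h η f).eval (α i))
            ((twPoly k t h η f).eval b - lam * (twPoly k t h η f).eval c) }

/-- The row-column twisted Reed-Solomon code `RCTRS_{h,t}(α,b,c,λ,η)`. -/
def RCTRS (k t h : ℕ) (η : F) {m : ℕ} (α : Fin m → F) (b c lam : F) :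
    Submodule F (Fin (m + 1) → F) :=
  Submodule.span F (rctrsWords k t h η α b c lam)

/-- Codewords of the extended row-column twisted Reed-Solomon code. -/
def rctrsWordsExt (k t h : ℕ) (η : F) {m : ℕ} (α : Fin m → F) (b c lam : F) :
    Set (Fin (m + 2) → F) :=
  { w | ∃ f : Fin k → F,
      w = Fin.snoc (Fin.snoc (fun i => (twPoly k t h η f).eval (α i))
            ((twPoly k t h η f).eval b - lam * (twPoly k t h η f).eval c)) (topCoeffFin f) }

/-- The extended row-column twisted Reed-Solomon code `RCTRS_{h,t}(α,b,c,λ,η,∞)`. -/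
def RCTRSext (k t h : ℕ) (η : F) {m : ℕ} (α : Fin m → F) (b c lam : F) :
    Submodule F (Fin (m + 2) → F) :=
  Submodule.span F (rctrsWordsExt k t h η α b c lam)

/-- Hamming weight. -/
def wt {n : ℕ} (x : Fin n → F) : ℕ := Nat.card {i : Fin n // x i ≠ 0}

/-- An `[n,k]` code is MDS if it has dimension `k` and minimum Hamming distance `n-k+1`. -/
def IsMDS {n : ℕ} (C : Submodule F (Fin n → F)) (k : ℕ) : Prop :=
  Module.finrank F C = k ∧ ∀ x ∈ C, x ≠ 0 → n - k + 1 ≤ wt x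

/-- The Schur square of a code. -/
def schurSq {n : ℕ} (C : Submodule F (Fin n → F)) : Submodule F (Fin n → F) :=
  Submodule.span F { w | ∃ x ∈ C, ∃ y ∈ C, w = x * y }

/-- Code equivalence: a permutation of coordinates followed by nonzero coordinatewise scaling. -/
def codeEquiv {n : ℕ} (C D : Submodule F (Fin n → F)) : Prop :=
  ∃ σ : Equiv.Perm (Fin n), ∃ v : Fin n → F, (∀ i, v i ≠ 0) ∧
    (C : Set (Fin n → F)) =
      (fun x : Fin n → F => fun i => v i * x (σ i)) '' (D : Set (Fin n → F))

/-- Generalized Reed-Solomon code. -/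
def GRS (k : ℕ) {n : ℕ} (α v : Fin n → F) : Submodule F (Fin n → F) :=
  Submodule.span F
    { w | ∃ f ∈ Polynomial.degreeLT F k, w = fun i => v i * Polynomial.eval (α i) f }

/-- Extended generalized Reed-Solomon code. -/
def GRSext (k : ℕ) {n : ℕ} (α v : Fin n → F) : Submodule F (Fin (n + 1) → F) :=
  Submodule.span F
    { w | ∃ f ∈ Polynomial.degreeLT F k,
        w = Fin.snoc (fun i => v i * Polynomial.eval (α i) f) (f.coeff (k - 1)) }

/-- A code of length `m+1` is non-RS if it is equivalent to no GRS and no extended GRS code. -/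
def IsNonRS {m : ℕ} (C : Submodule F (Fin (m + 1) → F)) : Prop :=
  (∀ (k' : ℕ) (α v : Fin (m + 1) → F), Function.Injective α → (∀ i, v i ≠ 0) →
      ¬ codeEquiv C (GRS k' α v)) ∧
  (∀ (k' : ℕ) (α v : Fin m → F), Function.Injective α → (∀ i, v i ≠ 0) →
      ¬ codeEquiv C (GRSext k' α v))

/-- Column twisted Reed-Solomon code. -/
def CTRS (k : ℕ) {m : ℕ} (α : Fin m → F) (b c lam : F) : Submodule F (Fin (m + 1) → F) :=
  Submodule.span F
    { w | ∃ f ∈ Polynomial.degreeLT F k,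
        w = Fin.snoc (fun i => Polynomial.eval (α i) f)
              (Polynomial.eval b f - lam * Polynomial.eval c f) }

/-- Extended column twisted Reed-Solomon code. -/
def CTRSext (k : ℕ) {m : ℕ} (α : Fin m → F) (b c lam : F) : Submodule F (Fin (m + 2) → F) :=
  Submodule.span F
    { w | ∃ f ∈ Polynomial.degreeLT F k,
        w = Fin.snoc (Fin.snoc (fun i => Polynomial.eval (α i) f)
              (Polynomial.eval b f - lam * Polynomial.eval c f)) (f.coeff (k - 1)) }

/-- `Φ_J(x) = ∏_{j∈J}(x−α_j)·(1 + (−1)^{|J|} η x ∏_{j∈J} α_j)`. -/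
def PhiRC {m : ℕ} (α : Fin m → F) (η : F) (J : Finset (Fin m)) (x : F) : F :=
  (∏ j ∈ J, (x - α j)) * (1 + (-1 : F) ^ J.card * η * x * ∏ j ∈ J, α j)

/-- `Ψ_J(x) = ∏_{j∈J}(x−α_j)·(1 + ηx + η Σ_{j∈J} α_j)`. -/
def PsiRC {m : ℕ} (α : Fin m → F) (η : F) (J : Finset (Fin m)) (x : F) : F :=
  (∏ j ∈ J, (x - α j)) * (1 + η * x + η * ∑ j ∈ J, α j)

/-- `Φ_{J,h}(x) = ∏_{j∈J}(x−α_j)·(1 + (−1)^{k−1−h} η σ_{k−h}(α_J, x))`. -/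
def PhiRCh {m : ℕ} (α : Fin m → F) (η : F) (k h : ℕ) (J : Finset (Fin m)) (x : F) : F :=
  (∏ j ∈ J, (x - α j)) *
    (1 + (-1 : F) ^ (k - 1 - h) * η * Multiset.esymm (x ::ₘ J.val.map α) (k - h))

/-- The image of a subgroup of `Fˣ` in `F`. -/
def unitsImage (G : Subgroup Fˣ) : Set F := (fun g : Fˣ => (g : F)) '' (G : Set Fˣ)

end

noncomputable section

variable {F : Type*} [Field F]

private lemma prodIoiCastSucc {M : Type*} [CommMonoid M] {r : ℕ}
    (f : Fin (r + 1) → M) (i : Fin r) :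
    ∏ j ∈ Finset.Ioi i.castSucc, f j =
      (∏ j ∈ Finset.Ioi i, f j.castSucc) * f (Fin.last r) := by
  rw [← Finset.filter_lt_eq_Ioi, Finset.prod_filter, ← Finset.filter_lt_eq_Ioi,
    Finset.prod_filter, Fin.prod_univ_castSucc]
  simp [Fin.castSucc_lt_castSucc_iff, Fin.castSucc_lt_last]

private lemma vandSnoc {r : ℕ} (v : Fin r → F) (x : F) :
    (∏ i : Fin (r+1), ∏ j ∈ Finset.Ioi i, ((Fin.snoc v x : Fin (r+1) → F) j - (Fin.snoc v x : Fin (r+1) → F) i)) =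
      (∏ i : Fin r, ∏ j ∈ Finset.Ioi i, (v j - v i)) * ∏ i : Fin r, (x - v i) := by
  rw [Fin.prod_univ_castSucc]
  have h1 : (Finset.Ioi (Fin.last r)) = (∅ : Finset (Fin (r+1))) := by
    ext j; simp [(Fin.le_last j).not_gt]
  rw [h1]
  simp only [Finset.prod_empty, mul_one]
  have h2 : ∀ i : Fin r, (∏ j ∈ Finset.Ioi i.castSucc,
      ((Fin.snoc v x : Fin (r+1) → F) j - (Fin.snoc v x : Fin (r+1) → F) i.castSucc)) =
      (∏ j ∈ Finset.Ioi i, (v j - v i)) * (x - v i) := by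
    intro i
    rw [prodIoiCastSucc]
    simp [Fin.snoc_castSucc, Fin.snoc_last]
  rw [Finset.prod_congr rfl fun i _ => h2 i, Finset.prod_mul_distrib]

private lemma hpi {r : ℕ} (i : Fin (r+1)) :
    (((finRotate (r+1))⁻¹ i : Fin (r+1)) : ℕ) + 1 =
      if (i : ℕ) = 0 then r + 1 else (i : ℕ) := by
  set y : Fin (r+1) := (finRotate (r+1))⁻¹ i with hy
  have hi : i = y + 1 := by
    rw [hy, ← finRotate_succ_apply]
    simp
  rcases eq_or_ne y (Fin.last r) with h | h
  · have : i = 0 := by rw [hi, h, Fin.last_add_one]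
    simp [this, h]
  · have hv : ((y + 1 : Fin (r+1)) : ℕ) = (y : ℕ) + 1 := by
      rw [Fin.val_add_one]
      simp [h]
    have : (i : ℕ) = (y : ℕ) + 1 := by rw [hi, hv]
    simp [this]

private lemma detD {r : ℕ} (v : Fin (r + 1) → F) (η : F) :
    (Matrix.of fun i j : Fin (r + 1) =>
        if (i : ℕ) = 0 then 1 + η * v j ^ (r + 1) else v j ^ (i : ℕ)).det =
      (∏ i : Fin (r+1), ∏ j ∈ Finset.Ioi i, (v j - v i)) *
        (1 + (-1 : F) ^ r * η * ∏ j, v j) := by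
  set V : Matrix (Fin (r+1)) (Fin (r+1)) F := (Matrix.vandermonde v).transpose with hV
  have hM : (Matrix.of fun i j : Fin (r+1) =>
      if (i : ℕ) = 0 then 1 + η * v j ^ (r + 1) else v j ^ (i : ℕ))
      = V.updateRow 0 ((fun _ => (1:F)) + η • fun j => v j ^ (r+1)) := by
    ext i j
    rcases eq_or_ne i 0 with hi | hi
    · subst hi; simp [Matrix.updateRow_self]
    · have hi' : (i : ℕ) ≠ 0 := fun h => hi (Fin.ext h)
      simp [Matrix.updateRow_ne hi, hV, Matrix.vandermonde, hi', hi]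
  rw [hM, Matrix.det_updateRow_add, Matrix.det_updateRow_smul]
  have h1 : V.updateRow 0 (fun _ => (1:F)) = V := by
    have : (fun _ : Fin (r+1) => (1:F)) = V 0 := by
      funext j; simp [hV, Matrix.vandermonde]
    rw [this, Matrix.updateRow_eq_self]
  have hW : V.updateRow 0 (fun j => v j ^ (r+1)) =
      (V * Matrix.diagonal v).submatrix (⇑((finRotate (r+1))⁻¹ : Equiv.Perm (Fin (r+1)))) id := by
    ext i j
    have hsub : (V * Matrix.diagonal v).submatrix
        (⇑((finRotate (r+1))⁻¹ : Equiv.Perm (Fin (r+1)))) id i j =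
        v j ^ ((((finRotate (r+1))⁻¹ i : Fin (r+1)) : ℕ) + 1) := by
      simp [Matrix.mul_diagonal, hV, Matrix.vandermonde, pow_succ]
    rw [hsub, hpi]
    rcases eq_or_ne i 0 with hi | hi
    · subst hi; simp [Matrix.updateRow_self]
    · have hi' : (i : ℕ) ≠ 0 := fun h => hi (Fin.ext h)
      simp [Matrix.updateRow_ne hi, hV, Matrix.vandermonde, hi']
  rw [h1, hW, Matrix.det_permute, Matrix.det_mul, Matrix.det_diagonal]
  have hsign : (Equiv.Perm.sign ((finRotate (r+1))⁻¹) : F) = (-1 : F) ^ r := by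
    rw [map_inv, sign_finRotate]
    simp
  rw [hsign]
  have hdV : V.det = ∏ i : Fin (r+1), ∏ j ∈ Finset.Ioi i, (v j - v i) := by
    rw [hV, Matrix.det_transpose, Matrix.det_vandermonde]
  rw [hdV]
  ring


/-- The matrix `B` of STATEMENT 3 (with `k = r+1`): first row
`(1+η α_j^k, …, 1−λ+η(b^k−λc^k))`, and `i`-th row `(α_j^i, …, b^i−λc^i)` for `1 ≤ i ≤ k−1`. -/
def Bmat0 {r : ℕ} (β : Fin r → F) (b c lam η : F) :
    Matrix (Fin (r + 1)) (Fin (r + 1)) F :=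
  Matrix.of fun i j =>
    if hj : (j : ℕ) < r then
      if (i : ℕ) = 0 then 1 + η * β ⟨j, hj⟩ ^ (r + 1) else β ⟨j, hj⟩ ^ (i : ℕ)
    else
      if (i : ℕ) = 0 then 1 - lam + η * (b ^ (r + 1) - lam * c ^ (r + 1))
      else b ^ (i : ℕ) - lam * c ^ (i : ℕ)

theorem stmt3 {r : ℕ} (β : Fin r → F) (hβ : Function.Injective β) (b c lam η : F) :
    (Bmat0 β b c lam η).det =
      (∏ j : Fin r, ∏ l ∈ Finset.Ioi j, (β l - β j)) *
        ((∏ j : Fin r, (b - β j)) * (1 + (-1 : F) ^ r * η * b * ∏ j : Fin r, β j) -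
          lam * ((∏ j : Fin r, (c - β j)) *
            (1 + (-1 : F) ^ r * η * c * ∏ j : Fin r, β j))) := by
  set vB : Fin (r+1) → F := Fin.snoc β b with hvB
  set vC : Fin (r+1) → F := Fin.snoc β c with hvC
  set Db : Matrix (Fin (r+1)) (Fin (r+1)) F := Matrix.of fun i j =>
      if (i : ℕ) = 0 then 1 + η * vB j ^ (r + 1) else vB j ^ (i : ℕ) with hDb
  set Dc : Matrix (Fin (r+1)) (Fin (r+1)) F := Matrix.of fun i j =>
      if (i : ℕ) = 0 then 1 + η * vC j ^ (r + 1) else vC j ^ (i : ℕ) with hDc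
  have hlt : ∀ (j : Fin (r+1)), j ≠ Fin.last r → (j : ℕ) < r :=
    fun j hj => Fin.lt_last_iff_ne_last.mpr hj
  have hBlast : ∀ i : Fin (r+1), Bmat0 β b c lam η i (Fin.last r) =
      (if (i : ℕ) = 0 then 1 - lam + η * (b ^ (r + 1) - lam * c ^ (r + 1))
        else b ^ (i : ℕ) - lam * c ^ (i : ℕ)) := by
    intro i
    have : ¬ ((Fin.last r : Fin (r+1)) : ℕ) < r := by simp
    simp only [Bmat0, Matrix.of_apply, dif_neg this]
  have hBmid : ∀ (i j : Fin (r+1)) (hj : (j : ℕ) < r), Bmat0 β b c lam η i j =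
      (if (i : ℕ) = 0 then 1 + η * β ⟨j, hj⟩ ^ (r + 1) else β ⟨j, hj⟩ ^ (i : ℕ)) := by
    intro i j hj
    simp only [Bmat0, Matrix.of_apply, dif_pos hj]
  have hsnocB : ∀ (j : Fin (r+1)) (hj : (j : ℕ) < r), vB j = β ⟨j, hj⟩ := by
    intro j hj
    rw [hvB]
    simp [Fin.snoc, hj]
    rfl
  have hsnocC : ∀ (j : Fin (r+1)) (hj : (j : ℕ) < r), vC j = β ⟨j, hj⟩ := by
    intro j hj
    rw [hvC]
    simp [Fin.snoc, hj]
    rfl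
  have hbL : vB (Fin.last r) = b := by rw [hvB]; exact Fin.snoc_last _ _
  have hcL : vC (Fin.last r) = c := by rw [hvC]; exact Fin.snoc_last _ _
  have hBsplit : Bmat0 β b c lam η = Db.updateCol (Fin.last r)
      ((fun i => Db i (Fin.last r)) + (-lam) • fun i => Dc i (Fin.last r)) := by
    ext i j
    rcases eq_or_ne j (Fin.last r) with hj | hj
    · subst hj
      rw [Matrix.updateCol_self, hBlast]
      simp only [hDb, hDc, Pi.add_apply, Pi.smul_apply, smul_eq_mul, Matrix.of_apply, hbL, hcL]
      rcases eq_or_ne (i : ℕ) 0 with hi | hi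
      · rw [if_pos hi, if_pos hi, if_pos hi]; ring
      · rw [if_neg hi, if_neg hi, if_neg hi]; ring
    · have hjr : (j : ℕ) < r := hlt j hj
      rw [Matrix.updateCol_ne hj, hBmid i j hjr]
      simp only [hDb, Matrix.of_apply, hsnocB j hjr]
  have hDbc : Db.updateCol (Fin.last r) (fun i => Dc i (Fin.last r)) = Dc := by
    ext i j
    rcases eq_or_ne j (Fin.last r) with hj | hj
    · subst hj; rw [Matrix.updateCol_self]
    · have hjr : (j : ℕ) < r := hlt j hj
      rw [Matrix.updateCol_ne hj]
      simp only [hDb, hDc, Matrix.of_apply, hsnocB j hjr, hsnocC j hjr]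
  rw [hBsplit, Matrix.det_updateCol_add, Matrix.det_updateCol_smul,
    Matrix.updateCol_eq_self, hDbc]
  rw [hDb, hDc, detD, detD]
  rw [hvB, hvC, vandSnoc, vandSnoc, Fin.prod_snoc, Fin.prod_snoc]
  ring

end
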